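/- Let n and ξ be real numbers with n − 12ξ ≠ 0 and n − 16ξ ≠ 0. Define q = ((2 − n) ξ (−n + 4ξ + 4nξ)) / (4 (n − 16ξ)(n − 12ξ)), L(ξ) = 2n² − n³ + 4(n³ − n² − 6n) ξ + 16(n² + 16n + 4) ξ² − 192(7n + 8) ξ³ + 9216 ξ⁴, k = (ξ (−n + 4ξ + 8nξ − 48ξ²) L(ξ)) / (4 (n − 16ξ)(n − 12ξ)³), and x₃ = (−n + 4ξ + 8nξ − 48ξ²) / (4 (n − 12ξ)). Then x₃ is a root of the cubic equation 4x³ + (1 − 12ξ) x² + (8q − 2ξ + 12ξ²) x + k = 0. -/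

import Mathlib

/-- The closed-form expression for the third root `x₃` of the cubic
`4x³ + (1 − 12ξ)x² + (8q − 2ξ + 12ξ²)x + k = 0` appearing in the global analysis of
the generalization of `Y^{p,q}`. -/
theorem statement18 (n ξ : ℝ) (h12 : n - 12 * ξ ≠ 0) (h16 : n - 16 * ξ ≠ 0)
    (q L k x₃ : ℝ)
    (hq : q = ((2 - n) * ξ * (-n + 4 * ξ + 4 * n * ξ)) / (4 * (n - 16 * ξ) * (n - 12 * ξ)))
    (hL : L = 2 * n ^ 2 - n ^ 3 + 4 * (n ^ 3 - n ^ 2 - 6 * n) * ξ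
        + 16 * (n ^ 2 + 16 * n + 4) * ξ ^ 2 - 192 * (7 * n + 8) * ξ ^ 3 + 9216 * ξ ^ 4)
    (hk : k = (ξ * (-n + 4 * ξ + 8 * n * ξ - 48 * ξ ^ 2) * L) /
        (4 * (n - 16 * ξ) * (n - 12 * ξ) ^ 3))
    (hx₃ : x₃ = (-n + 4 * ξ + 8 * n * ξ - 48 * ξ ^ 2) / (4 * (n - 12 * ξ))) :
    4 * x₃ ^ 3 + (1 - 12 * ξ) * x₃ ^ 2 + (8 * q - 2 * ξ + 12 * ξ ^ 2) * x₃ + k = 0 := by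
  subst hq hL hk hx₃
  have h12' : n - ξ * 12 ≠ 0 := by rwa [mul_comm] at h12
  have h16' : n - ξ * 16 ≠ 0 := by rwa [mul_comm] at h16
  field_simp
  ring
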